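/- With the same setup, if d^(i) ≠ d and the hashes are such that Pr[h_j(d^(i)) = h_j(d)] = 1/m (pairwise-uniform hashing), then E[M(j,h_j(d))^(i)] = ξ_j(d^(i)) · Pr[h_j(d^(i)) = h_j(d)] = ξ_j(d^(i))/m. More precisely, conditioning on deterministic hash values a = h_j(d^(i)), b = h_j(d), one has E[c_ε k B ξ_j(d^(i)) H_m[a,L] H_m[L,b] 1{J=j}] = ξ_j(d^(i)) · 1{a = b}. -/

import Mathlib

/-- The Sylvester Hadamard matrix of order `2^t`, defined recursively by
`H_1 = [1]` and `H_{2n} = [[H_n, H_n], [H_n, -H_n]]`. -/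
noncomputable def Had : (t : ℕ) → Matrix (Fin (2^t)) (Fin (2^t)) ℝ
  | 0 => fun _ _ => 1
  | (t+1) => fun i j =>
      (if 2^t ≤ (i : ℕ) ∧ 2^t ≤ (j : ℕ) then (-1 : ℝ) else 1) *
        Had t ⟨(i : ℕ) % 2^t, Nat.mod_lt _ (by positivity)⟩
              ⟨(j : ℕ) % 2^t, Nat.mod_lt _ (by positivity)⟩

/-- The probability mass of one sample `(J, L, B)` of the client's randomness:
`J` uniform on `Fin k`, `L` uniform on `Fin (2^t)`, and the sign bit `B` equal to `+1`
(`true`) with probability `e^ε/(1+e^ε)` and `-1` (`false`) with probability `1/(1+e^ε)`. -/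
noncomputable def sketchPMF (ε : ℝ) (k t : ℕ) (ω : Fin k × Fin (2^t) × Bool) : ℝ :=
  ((1 : ℝ)/k) * ((1 : ℝ)/2^t) *
    (if ω.2.2 then Real.exp ε / (1 + Real.exp ε) else 1 / (1 + Real.exp ε))

/-- The debiased contribution `c_ε · k · B · s · H_m[a, L] · H_m[L, x] · 1{J = j}`
of an entry encoded at hash cell `a` with sign `s` to the sketch cell `(j, x)`. -/
noncomputable def contrib (ε : ℝ) (k t : ℕ) (a x : Fin (2^t)) (s : ℝ) (j : Fin k)
    (ω : Fin k × Fin (2^t) × Bool) : ℝ :=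
  ((Real.exp ε + 1)/(Real.exp ε - 1)) * k * (if ω.2.2 then (1 : ℝ) else -1) * s *
    Had t a ω.2.1 * Had t ω.2.1 x * (if ω.1 = j then 1 else 0)

def finDouble (t : ℕ) : (Fin (2^t) ⊕ Fin (2^t)) ≃ Fin (2^(t+1)) :=
  (finSumFinEquiv).trans (finCongr (by ring))

lemma finDouble_inl (t : ℕ) (l : Fin (2^t)) :
    ((finDouble t (Sum.inl l) : Fin (2^(t+1))) : ℕ) = (l : ℕ) := by
  simp [finDouble, finCongr, finSumFinEquiv]

lemma finDouble_inr (t : ℕ) (l : Fin (2^t)) :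
    ((finDouble t (Sum.inr l) : Fin (2^(t+1))) : ℕ) = 2^t + (l : ℕ) := by
  simp [finDouble, finCongr, finSumFinEquiv, Nat.add_comm]

lemma had_orth (t : ℕ) : ∀ a b : Fin (2^t),
    ∑ l : Fin (2^t), Had t a l * Had t l b = if a = b then (2^t : ℝ) else 0 := by
  induction t with
  | zero =>
    intro a b
    have : a = b := Fin.ext (by omega)
    simp [Had, this]
  | succ t ih =>
    intro a b
    rw [← Equiv.sum_comp (finDouble t) (fun l => Had (t+1) a l * Had (t+1) l b),
      Fintype.sum_sum_type]
    have ha : (a : ℕ) % 2^t < 2^t := Nat.mod_lt _ (by positivity)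
    have hb : (b : ℕ) % 2^t < 2^t := Nat.mod_lt _ (by positivity)
    set a' : Fin (2^t) := ⟨(a : ℕ) % 2^t, ha⟩ with ha'
    set b' : Fin (2^t) := ⟨(b : ℕ) % 2^t, hb⟩ with hb'
    have hlow : ∀ l : Fin (2^t),
        Had (t+1) a (finDouble t (Sum.inl l)) * Had (t+1) (finDouble t (Sum.inl l)) b
        = Had t a' l * Had t l b' := by
      intro l
      simp [Had, finDouble_inl t l, Nat.mod_eq_of_lt l.2, Nat.not_le.2 l.2, ha', hb']
    have hhigh : ∀ l : Fin (2^t),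
        Had (t+1) a (finDouble t (Sum.inr l)) * Had (t+1) (finDouble t (Sum.inr l)) b
        = ((if 2^t ≤ (a:ℕ) then (-1:ℝ) else 1) * (if 2^t ≤ (b:ℕ) then (-1:ℝ) else 1)) *
          (Had t a' l * Had t l b') := by
      intro l
      have h1 := finDouble_inr t l
      have hl : 2^t ≤ ((finDouble t (Sum.inr l) : Fin (2^(t+1))) : ℕ) := by
        rw [h1]; exact Nat.le_add_right _ _
      have hmod : ((finDouble t (Sum.inr l) : Fin (2^(t+1))) : ℕ) % 2^t = (l:ℕ) := by
        rw [h1, Nat.add_mod_left, Nat.mod_eq_of_lt l.2]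
      simp only [Had, hl, true_and, and_true, hmod, Nat.mod_eq_of_lt l.2]
      by_cases hA : 2^t ≤ (a:ℕ) <;> by_cases hB : 2^t ≤ (b:ℕ) <;>
        simp [hA, hB, ha', hb'] <;> ring
    simp only [hlow, hhigh]
    rw [← Finset.mul_sum, ih a' b']
    have h2a : (a:ℕ) < 2^t + 2^t := lt_of_lt_of_eq a.2 (by ring)
    have h2b : (b:ℕ) < 2^t + 2^t := lt_of_lt_of_eq b.2 (by ring)
    have hamod : (a:ℕ) % 2^t = if 2^t ≤ (a:ℕ) then (a:ℕ) - 2^t else (a:ℕ) := by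
      split
      · rw [Nat.mod_eq_sub_mod ‹_›, Nat.mod_eq_of_lt (by omega)]
      · exact Nat.mod_eq_of_lt (by omega)
    have hbmod : (b:ℕ) % 2^t = if 2^t ≤ (b:ℕ) then (b:ℕ) - 2^t else (b:ℕ) := by
      split
      · rw [Nat.mod_eq_sub_mod ‹_›, Nat.mod_eq_of_lt (by omega)]
      · exact Nat.mod_eq_of_lt (by omega)
    rcases eq_or_ne a' b' with he | he
    · have hmods : (a:ℕ) % 2^t = (b:ℕ) % 2^t := by
        have := congrArg Fin.val he
        simpa [ha', hb'] using this
      rw [if_pos he]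
      by_cases hA : 2^t ≤ (a:ℕ) <;> by_cases hB : 2^t ≤ (b:ℕ)
      · have hab : a = b := Fin.ext (by rw [if_pos hA] at hamod; rw [if_pos hB] at hbmod; omega)
        rw [if_pos hab, if_pos hA, if_pos hB, pow_succ]; ring
      · rw [if_neg (fun h : a = b => hB (h ▸ hA)), if_pos hA, if_neg hB]; ring
      · rw [if_neg (fun h : a = b => hA (h ▸ hB)), if_neg hA, if_pos hB]; ring
      · have hab : a = b := Fin.ext (by rw [if_neg hA] at hamod; rw [if_neg hB] at hbmod; omega)
        rw [if_pos hab, if_neg hA, if_neg hB, pow_succ]; ring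
    · rw [if_neg he, if_neg (fun h : a = b => he (by rw [ha', hb']; subst h; rfl))]
      ring

open Classical in
/-- For an entry with value `d⁽ⁱ⁾ ≠ d`, conditioning on deterministic hash cells
`a = h_j(d⁽ⁱ⁾)` and `b = h_j(d)`, the expected debiased contribution to cell `(j, b)`
is `ξ_j(d⁽ⁱ⁾) · 1{a = b}`; hence if the hash collides with probability `1/m`
(pairwise-uniform hashing), the expected contribution is `ξ_j(d⁽ⁱ⁾)/m`. -/
theorem stmt_8 (ε : ℝ) (hε : 0 < ε) (t k : ℕ) (hk : 0 < k)
    (s : ℝ) (hs : s = 1 ∨ s = -1) (j : Fin k) :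
    (∀ a b : Fin (2^t),
      ∑ ω : Fin k × Fin (2^t) × Bool,
        sketchPMF ε k t ω * contrib ε k t a b s j ω = s * (if a = b then 1 else 0)) ∧
    (∀ ν : Fin (2^t) × Fin (2^t) → ℝ, (∀ ab, 0 ≤ ν ab) → (∑ ab, ν ab = 1) →
      (∑ ab, (if ab.1 = ab.2 then ν ab else 0)) = (1 : ℝ)/2^t →
      ∑ ab, ν ab * ∑ ω : Fin k × Fin (2^t) × Bool,
        sketchPMF ε k t ω * contrib ε k t ab.1 ab.2 s j ω = s / 2^t) := by
  have he1 : (1:ℝ) < Real.exp ε := by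
    calc (1:ℝ) = Real.exp 0 := Real.exp_zero.symm
    _ < Real.exp ε := Real.exp_lt_exp.2 hε
  have hkne : (k:ℝ) ≠ 0 := Nat.cast_ne_zero.2 hk.ne'
  have h2ne : ((2:ℝ)^t) ≠ 0 := by positivity
  have hene : Real.exp ε - 1 ≠ 0 := by linarith
  have hene' : 1 + Real.exp ε ≠ 0 := by linarith
  have part1 : ∀ a b : Fin (2^t),
      ∑ ω : Fin k × Fin (2^t) × Bool,
        sketchPMF ε k t ω * contrib ε k t a b s j ω = s * (if a = b then 1 else 0) := by
    intro a b
    rw [Fintype.sum_prod_type]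
    rw [Finset.sum_eq_single_of_mem j (Finset.mem_univ j)
      (by intro j' _ hne; apply Finset.sum_eq_zero; intro p _
          simp [sketchPMF, contrib, hne])]
    rw [Fintype.sum_prod_type]
    have hsum : ∀ l : Fin (2^t),
        (∑ bo : Bool, sketchPMF ε k t (j, l, bo) * contrib ε k t a b s j (j, l, bo))
        = (1/2^t) * s * (Had t a l * Had t l b) := by
      intro l
      rw [Fintype.sum_bool]
      simp only [sketchPMF, contrib, if_true, if_false, ite_true, ite_false, Bool.false_eq_true]
      field_simp
      ring
    simp only [hsum]
    rw [← Finset.mul_sum, had_orth t a b]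
    split
    · field_simp
    · ring
  refine ⟨part1, ?_⟩
  intro ν hν0 hν1 hνd
  have : ∀ ab : Fin (2^t) × Fin (2^t),
      ν ab * ∑ ω : Fin k × Fin (2^t) × Bool,
        sketchPMF ε k t ω * contrib ε k t ab.1 ab.2 s j ω
      = s * (if ab.1 = ab.2 then ν ab else 0) := by
    intro ab
    rw [part1 ab.1 ab.2]
    split <;> ring
  rw [Finset.sum_congr rfl (fun ab _ => this ab), ← Finset.mul_sum, hνd]
  ring
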